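/- Under the setup, Assumptions 2–5, and the symmetric case hypothesis, fix an integer K with 1 ≤ K ≤ N and let W_K := {w ∈ ℝ^N : w_n = 0 in exactly K entries and w_n = 1 otherwise} (so all w ∈ W_K satisfy N^{−1/2}‖w‖₂ ≤ 1 ≤ C_w). Define C_∞ := sup_{θ∈Ω_θ} max_{1≤n≤N} max{‖g_n(θ)‖₁, ‖h_n(θ)‖₁} and δ_K := K·C_∞/N. If δ_K ≤ Δ_δ, then for every w ∈ W_K and every θ̂(w) ∈ Ω_θ with G(θ̂(w), w) = 0, ‖θ̂_IJ(w) − θ̂(w)‖₂ ≤ 2·C_op²·C_IJ·(K·C_∞/N)² ≤ 2·C_op²·C_IJ·K²·D²·max{C_g, C_h}²/N. -/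

import Mathlib

/- Swiss Army Infinitesimal Jackknife: consistency for leave-K-out
   cross-validation (Corollary 1). -/

open scoped BigOperators

noncomputable def vnorm2 {ι : Type*} [Fintype ι] (v : ι → ℝ) : ℝ :=
  Real.sqrt (∑ i, (v i) ^ 2)

noncomputable def vnorm1 {ι : Type*} [Fintype ι] (v : ι → ℝ) : ℝ :=
  ∑ i, |v i|

noncomputable def mnorm1 {D : ℕ} (M : Matrix (Fin D) (Fin D) ℝ) : ℝ :=
  ∑ i, ∑ j, |M i j|

noncomputable def opNorm {D : ℕ} (M : Matrix (Fin D) (Fin D) ℝ) : ℝ :=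
  ‖Matrix.toEuclideanCLM (𝕜 := ℝ) M‖

/-- `G(θ, w) = (1/N) ∑ₙ wₙ gₙ(θ)`. -/
noncomputable def Gfun {N D : ℕ} (g : Fin N → (Fin D → ℝ) → Fin D → ℝ)
    (θ : Fin D → ℝ) (w : Fin N → ℝ) : Fin D → ℝ :=
  (N : ℝ)⁻¹ • ∑ n, w n • g n θ

/-- `H(θ, w) = (1/N) ∑ₙ wₙ hₙ(θ)`. -/
noncomputable def Hfun {N D : ℕ} (hm : Fin N → (Fin D → ℝ) → Matrix (Fin D) (Fin D) ℝ)
    (θ : Fin D → ℝ) (w : Fin N → ℝ) : Matrix (Fin D) (Fin D) ℝ :=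
  (N : ℝ)⁻¹ • ∑ n, w n • hm n θ

/-- The infinitesimal jackknife `θ̂_IJ(w) = θ̂₁ − H₁⁻¹ G(θ̂₁, w − 1_w)`. -/
noncomputable def thetaIJ {N D : ℕ} (g : Fin N → (Fin D → ℝ) → Fin D → ℝ)
    (hm : Fin N → (Fin D → ℝ) → Matrix (Fin D) (Fin D) ℝ)
    (θ1 : Fin D → ℝ) (w : Fin N → ℝ) : Fin D → ℝ :=
  θ1 - (Hfun hm θ1 1)⁻¹.mulVec (Gfun g θ1 (w - 1))

/-- The leave-`K`-out weight vectors: `wₙ = 0` in exactly `K` entries and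
`wₙ = 1` otherwise. -/
def leaveKOut (N K : ℕ) : Set (Fin N → ℝ) :=
  {w | ∃ S : Finset (Fin N), S.card = K ∧ w = fun n => if n ∈ S then 0 else 1}

open scoped Matrix

set_option synthInstance.maxHeartbeats 1000000
set_option maxHeartbeats 1000000

/-! ### auxiliary norm lemmas -/

section norms
variable {ι : Type*} [Fintype ι]

lemma vnorm2_eq_norm (v : ι → ℝ) :
    vnorm2 v = ‖(WithLp.equiv 2 (ι → ℝ)).symm v‖ := by
  rw [EuclideanSpace.norm_eq, vnorm2]
  congr 1; apply Finset.sum_congr rfl; intro i _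
  have : ‖(WithLp.equiv 2 (ι → ℝ)).symm v i‖ = |v i| := rfl
  rw [this, sq_abs]

lemma vnorm2_nonneg (v : ι → ℝ) : 0 ≤ vnorm2 v := Real.sqrt_nonneg _

lemma vnorm2_le_vnorm1 (v : ι → ℝ) : vnorm2 v ≤ vnorm1 v := by
  rw [vnorm2, vnorm1]
  have h1 : ∑ i, (v i) ^ 2 ≤ (∑ i, |v i|) ^ 2 := by
    calc ∑ i, (v i) ^ 2 = ∑ i, |v i| ^ 2 := by simp [sq_abs]
    _ ≤ (∑ i, |v i|) ^ 2 :=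
      Finset.sum_sq_le_sq_sum_of_nonneg (fun i _ => abs_nonneg _)
  calc Real.sqrt (∑ i, (v i) ^ 2) ≤ Real.sqrt ((∑ i, |v i|) ^ 2) := Real.sqrt_le_sqrt h1
  _ = ∑ i, |v i| := Real.sqrt_sq (Finset.sum_nonneg fun i _ => abs_nonneg _)

lemma vnorm1_le_sqrt_card (v : ι → ℝ) :
    vnorm1 v ≤ Real.sqrt (Fintype.card ι) * vnorm2 v := by
  rw [vnorm1, vnorm2]
  calc ∑ i, |v i| = ∑ i, 1 * |v i| := by simp
  _ ≤ Real.sqrt (∑ _i : ι, (1:ℝ) ^ 2) * Real.sqrt (∑ i, |v i| ^ 2) :=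
      Real.sum_mul_le_sqrt_mul_sqrt _ _ _
  _ = Real.sqrt (Fintype.card ι) * Real.sqrt (∑ i, (v i) ^ 2) := by
      simp [sq_abs, Finset.card_univ]

lemma vnorm2_pos {v : ι → ℝ} (h : v ≠ 0) : 0 < vnorm2 v := by
  rw [vnorm2]
  apply Real.sqrt_pos.mpr
  rcases Function.ne_iff.mp h with ⟨i, hi⟩
  have h2 : 0 < (v i) ^ 2 := by
    have : v i ≠ 0 := by simpa using hi
    positivity
  exact lt_of_lt_of_le h2
    (Finset.single_le_sum (f := fun i => v i ^ 2) (fun j _ => sq_nonneg _)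
      (Finset.mem_univ i))

lemma vnorm2_smul (c : ℝ) (v : ι → ℝ) : vnorm2 (c • v) = |c| * vnorm2 v := by
  rw [vnorm2_eq_norm, vnorm2_eq_norm]
  have : (WithLp.equiv 2 (ι → ℝ)).symm (c • v) = c • (WithLp.equiv 2 (ι → ℝ)).symm v := rfl
  rw [this, norm_smul, Real.norm_eq_abs]

lemma vnorm2_sum_le {α : Type*} (s : Finset α) (v : α → (ι → ℝ)) :
    vnorm2 (∑ n ∈ s, v n) ≤ ∑ n ∈ s, vnorm2 (v n) := by
  have h : (WithLp.equiv 2 (ι → ℝ)).symm (∑ n ∈ s, v n)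
      = ∑ n ∈ s, (WithLp.equiv 2 (ι → ℝ)).symm (v n) := by
    exact WithLp.toLp_sum (p := 2) (s := s) (f := v)
  rw [vnorm2_eq_norm, h]
  calc ‖∑ n ∈ s, (WithLp.equiv 2 (ι → ℝ)).symm (v n)‖
      ≤ ∑ n ∈ s, ‖(WithLp.equiv 2 (ι → ℝ)).symm (v n)‖ := norm_sum_le _ _
    _ = ∑ n ∈ s, vnorm2 (v n) := by
        exact Finset.sum_congr rfl fun n _ => (vnorm2_eq_norm _).symm

end norms

/-! ### operator norm lemmas -/

section opnorms
variable {D : ℕ} {α : Type*}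

lemma opNorm_nonneg (M : Matrix (Fin D) (Fin D) ℝ) : 0 ≤ opNorm M := norm_nonneg _

lemma opNorm_sum_le (s : Finset α) (f : α → Matrix (Fin D) (Fin D) ℝ) :
    opNorm (∑ i ∈ s, f i) ≤ ∑ i ∈ s, opNorm (f i) := by
  unfold opNorm
  rw [map_sum]
  exact norm_sum_le _ _

lemma opNorm_smul (c : ℝ) (M : Matrix (Fin D) (Fin D) ℝ) :
    opNorm (c • M) = |c| * opNorm M := by
  unfold opNorm
  rw [map_smul]
  rw [norm_smul c (Matrix.toEuclideanCLM (𝕜 := ℝ) M)]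
  simp [Real.norm_eq_abs]

lemma opNorm_neg (M : Matrix (Fin D) (Fin D) ℝ) : opNorm (-M) = opNorm M := by
  unfold opNorm; rw [map_neg, norm_neg]

lemma opNorm_add_le (A B : Matrix (Fin D) (Fin D) ℝ) :
    opNorm (A + B) ≤ opNorm A + opNorm B := by
  unfold opNorm; rw [map_add]; exact norm_add_le _ _

lemma opNorm_sub_le (A B : Matrix (Fin D) (Fin D) ℝ) :
    opNorm (A - B) ≤ opNorm A + opNorm B := by
  unfold opNorm; rw [map_sub]; exact norm_sub_le _ _

lemma toECLM_apply (M : Matrix (Fin D) (Fin D) ℝ) (x : Fin D → ℝ) :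
    Matrix.toEuclideanCLM (𝕜 := ℝ) M ((WithLp.equiv 2 (Fin D → ℝ)).symm x)
      = (WithLp.equiv 2 (Fin D → ℝ)).symm (M.mulVec x) := by
  exact Matrix.toEuclideanCLM_toLp M x

lemma vnorm2_mulVec_le (M : Matrix (Fin D) (Fin D) ℝ) (x : Fin D → ℝ) :
    vnorm2 (M.mulVec x) ≤ opNorm M * vnorm2 x := by
  rw [vnorm2_eq_norm, vnorm2_eq_norm, ← toECLM_apply]
  exact (Matrix.toEuclideanCLM (𝕜 := ℝ) M).le_opNorm _

lemma opNorm_le_frob (M : Matrix (Fin D) (Fin D) ℝ) :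
    opNorm M ≤ vnorm2 (fun p : Fin D × Fin D => M p.1 p.2) := by
  apply ContinuousLinearMap.opNorm_le_bound _ (Real.sqrt_nonneg _)
  intro x
  set v : Fin D → ℝ := WithLp.equiv 2 (Fin D → ℝ) x with hv
  have hx : x = (WithLp.equiv 2 (Fin D → ℝ)).symm v := rfl
  rw [hx, toECLM_apply, ← vnorm2_eq_norm, ← vnorm2_eq_norm]
  unfold vnorm2
  have key : ∑ i, (M.mulVec v i) ^ 2
      ≤ (∑ p : Fin D × Fin D, (M p.1 p.2) ^ 2) * ∑ j, (v j) ^ 2 := by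
    rw [Fintype.sum_prod_type, Finset.sum_mul]
    apply Finset.sum_le_sum
    intro i _
    rw [Matrix.mulVec, dotProduct]
    exact Finset.sum_mul_sq_le_sq_mul_sq _ _ _
  calc Real.sqrt (∑ i, (M.mulVec v i) ^ 2)
      ≤ Real.sqrt ((∑ p : Fin D × Fin D, (M p.1 p.2) ^ 2) * ∑ j, (v j) ^ 2) :=
        Real.sqrt_le_sqrt key
    _ = _ := Real.sqrt_mul (Finset.sum_nonneg fun _ _ => sq_nonneg _) _

lemma mnorm1_eq_vnorm1 (M : Matrix (Fin D) (Fin D) ℝ) :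
    mnorm1 M = vnorm1 (fun p : Fin D × Fin D => M p.1 p.2) := by
  rw [mnorm1, vnorm1, Fintype.sum_prod_type]

lemma opNorm_le_mnorm1 (M : Matrix (Fin D) (Fin D) ℝ) :
    opNorm M ≤ mnorm1 M := by
  rw [mnorm1_eq_vnorm1]
  exact (opNorm_le_frob M).trans (vnorm2_le_vnorm1 _)

end opnorms

/-! ### quadratic form lower bound -/

section quad
variable {D : ℕ}

lemma dot_le_vnorm2 (x y : Fin D → ℝ) :
    x ⬝ᵥ y ≤ vnorm2 x * vnorm2 y := by
  rw [dotProduct]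
  unfold vnorm2
  exact Real.sum_mul_le_sqrt_mul_sqrt _ _ _

lemma vnorm2_sq (x : Fin D → ℝ) : vnorm2 x ^ 2 = x ⬝ᵥ x := by
  unfold vnorm2
  rw [Real.sq_sqrt (Finset.sum_nonneg fun _ _ => sq_nonneg _), dotProduct]
  exact Finset.sum_congr rfl fun i _ => (sq (x i)).symm ▸ by ring

lemma psd_dot (M : Matrix (Fin D) (Fin D) ℝ) (hpd : M.PosSemidef) (x : Fin D → ℝ) :
    0 ≤ x ⬝ᵥ M.mulVec x := by
  have := hpd.re_dotProduct_nonneg (𝕜 := ℝ) x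
  simpa using this

lemma bilin_symm (M : Matrix (Fin D) (Fin D) ℝ) (hsym : M.IsSymm) (x y : Fin D → ℝ) :
    x ⬝ᵥ M.mulVec y = y ⬝ᵥ M.mulVec x := by
  rw [Matrix.dotProduct_mulVec]
  conv_lhs => rw [← hsym.eq]
  rw [Matrix.vecMul_transpose, dotProduct_comm]

lemma cs_bilin (M : Matrix (Fin D) (Fin D) ℝ) (hsym : M.IsSymm) (hpd : M.PosSemidef)
    (x y : Fin D → ℝ) :
    (x ⬝ᵥ M.mulVec y) ^ 2 ≤ (x ⬝ᵥ M.mulVec x) * (y ⬝ᵥ M.mulVec y) := by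
  have h : ∀ t : ℝ, 0 ≤ (y ⬝ᵥ M.mulVec y) * (t * t)
      + (2 * (x ⬝ᵥ M.mulVec y)) * t + (x ⬝ᵥ M.mulVec x) := by
    intro t
    have h0 := psd_dot M hpd (x + t • y)
    have hexp : (x + t • y) ⬝ᵥ M.mulVec (x + t • y)
        = (y ⬝ᵥ M.mulVec y) * (t * t) + (2 * (x ⬝ᵥ M.mulVec y)) * t + (x ⬝ᵥ M.mulVec x) := by
      rw [Matrix.mulVec_add, Matrix.mulVec_smul, add_dotProduct,
        smul_dotProduct, dotProduct_add, dotProduct_add,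
        dotProduct_smul, dotProduct_smul, bilin_symm M hsym y x]
      simp [smul_eq_mul]; ring
    linarith [hexp ▸ h0]
  have hd := discrim_le_zero h
  rw [discrim] at hd
  nlinarith [hd]

lemma quad_lower (M : Matrix (Fin D) (Fin D) ℝ) (hsym : M.IsSymm) (hpd : M.PosDef)
    (Cop : ℝ) (hCop0 : 0 < Cop) (hCop : opNorm M⁻¹ ≤ Cop) (x : Fin D → ℝ) :
    vnorm2 x ^ 2 / Cop ≤ x ⬝ᵥ M.mulVec x := by
  have hdet : IsUnit M.det := isUnit_iff_ne_zero.mpr hpd.det_pos.ne'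
  set y : Fin D → ℝ := M⁻¹.mulVec x with hy
  have hMy : M.mulVec y = x := by
    rw [hy, Matrix.mulVec_mulVec, Matrix.mul_nonsing_inv _ hdet, Matrix.one_mulVec]
  set s : ℝ := vnorm2 x ^ 2 with hs
  have hs0 : 0 ≤ s := sq_nonneg _
  have hBxy : x ⬝ᵥ M.mulVec y = s := by rw [hMy, ← vnorm2_sq]
  have hByy : y ⬝ᵥ M.mulVec y ≤ Cop * s := by
    rw [hMy]
    calc y ⬝ᵥ x ≤ vnorm2 y * vnorm2 x := dot_le_vnorm2 _ _
      _ ≤ (Cop * vnorm2 x) * vnorm2 x := by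
          apply mul_le_mul_of_nonneg_right _ (Real.sqrt_nonneg _)
          exact (vnorm2_mulVec_le _ _).trans
            (mul_le_mul_of_nonneg_right hCop (Real.sqrt_nonneg _))
      _ = Cop * s := by rw [hs]; ring
  have hcs := cs_bilin M hsym hpd.posSemidef x y
  rw [hBxy] at hcs
  have hBxx : 0 ≤ x ⬝ᵥ M.mulVec x := psd_dot M hpd.posSemidef x
  rw [div_le_iff₀ hCop0]
  rcases eq_or_lt_of_le hs0 with h0 | h0
  · rw [← h0]; positivity
  · have h1 : s * s ≤ (x ⬝ᵥ M.mulVec x * Cop) * s := by nlinarith [hcs, hByy, hBxx]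
    exact le_of_mul_le_mul_right h1 h0

end quad

/-! ### derivative transport lemmas -/

lemma sum_mulVec {D' α : Type*} [Fintype D'] {s : Finset α}
    (A : α → Matrix D' D' ℝ) (x : D' → ℝ) :
    (∑ n ∈ s, A n).mulVec x = ∑ n ∈ s, (A n).mulVec x := by
  funext i
  simp only [Matrix.mulVec, dotProduct, Finset.sum_apply, Matrix.sum_apply,
    Finset.sum_mul]
  exact Finset.sum_comm

noncomputable def eL (D : ℕ) : EuclideanSpace ℝ (Fin D) ≃L[ℝ] (Fin D → ℝ) :=
  PiLp.continuousLinearEquiv 2 ℝ (fun _ : Fin D => ℝ)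

section deriv
variable {N D : ℕ}
  (g : Fin N → (Fin D → ℝ) → Fin D → ℝ)
  (hm : Fin N → (Fin D → ℝ) → Matrix (Fin D) (Fin D) ℝ)
  (Ωθ : Set (Fin D → ℝ))

lemma hasFDeriv_G_pi
    (hderiv : ∀ n, ∀ θ ∈ Ωθ,
      HasFDerivWithinAt (g n) ((hm n θ).mulVecLin.toContinuousLinearMap) Ωθ θ)
    (w : Fin N → ℝ) (θ : Fin D → ℝ) (hθ : θ ∈ Ωθ) :
    HasFDerivWithinAt (fun θ' => Gfun g θ' w)
      ((Hfun hm θ w).mulVecLin.toContinuousLinearMap) Ωθ θ := by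
  have h1 : ∀ n ∈ Finset.univ, HasFDerivWithinAt (fun θ' => w n • g n θ')
      (w n • (hm n θ).mulVecLin.toContinuousLinearMap) Ωθ θ :=
    fun n _ => (hderiv n θ hθ).const_smul (w n)
  have h2 := (HasFDerivWithinAt.sum h1).const_smul ((N : ℝ)⁻¹)
  have heq : ((N : ℝ)⁻¹ • ∑ n, w n • (hm n θ).mulVecLin.toContinuousLinearMap)
      = (Hfun hm θ w).mulVecLin.toContinuousLinearMap := by
    apply ContinuousLinearMap.ext
    intro x
    simp only [ContinuousLinearMap.smul_apply, ContinuousLinearMap.coe_sum',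
      Finset.sum_apply, LinearMap.coe_toContinuousLinearMap', Matrix.mulVecLin_apply,
      ContinuousLinearMap.coe_smul', Pi.smul_apply, Hfun]
    rw [Matrix.smul_mulVec, sum_mulVec]
    congr 1
    apply Finset.sum_congr rfl
    intro n _
    rw [Matrix.smul_mulVec]
  rw [heq] at h2
  have hf : (fun θ' => Gfun g θ' w) = (N:ℝ)⁻¹ • ∑ i, fun θ' => w i • g i θ' := by
    ext θ' i
    simp [Gfun, Finset.sum_apply]
  rw [hf]
  exact h2

lemma hasFDeriv_G_E
    (hderiv : ∀ n, ∀ θ ∈ Ωθ,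
      HasFDerivWithinAt (g n) ((hm n θ).mulVecLin.toContinuousLinearMap) Ωθ θ)
    (w : Fin N → ℝ) (θ : Fin D → ℝ) (hθ : θ ∈ Ωθ) :
    HasFDerivWithinAt (fun x : EuclideanSpace ℝ (Fin D) => (eL D).symm (Gfun g (eL D x) w))
      (Matrix.toEuclideanCLM (𝕜 := ℝ) (Hfun hm θ w))
      (eL D ⁻¹' Ωθ) ((eL D).symm θ) := by
  have h1 := hasFDeriv_G_pi g hm Ωθ hderiv w θ hθ
  have h2 : HasFDerivWithinAt ((fun θ' => Gfun g θ' w) ∘ (eL D))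
      (((Hfun hm θ w).mulVecLin.toContinuousLinearMap).comp (eL D : _ →L[ℝ] _))
      (eL D ⁻¹' Ωθ) ((eL D).symm θ) := by
    rw [ContinuousLinearEquiv.comp_right_hasFDerivWithinAt_iff]
    simpa using h1
  exact ((eL D).symm.comp_hasFDerivWithinAt_iff
    (f := (fun θ' => Gfun g θ' w) ∘ (eL D))
    (s := eL D ⁻¹' Ωθ) (x := (eL D).symm θ)).mpr h2

end deriv

/-! ### weight-difference algebra -/

lemma onemw_sum {N : ℕ} {V : Type*} [AddCommGroup V] [Module ℝ V]
    (S : Finset (Fin N)) (v : Fin N → V) :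
    (∑ n, (1:ℝ) • v n) - (∑ n, (if n ∈ S then (0:ℝ) else 1) • v n) = ∑ n ∈ S, v n := by
  rw [← Finset.sum_sub_distrib]
  have : ∀ n, (1:ℝ) • v n - (if n ∈ S then (0:ℝ) else 1) • v n
      = if n ∈ S then v n else 0 := by
    intro n
    by_cases h : n ∈ S <;> simp [h]
  simp_rw [this]
  rw [Finset.sum_ite_mem, Finset.univ_inter]

lemma Gfun_sub_w {N D : ℕ} (g : Fin N → (Fin D → ℝ) → Fin D → ℝ)
    (θ : Fin D → ℝ) (w w' : Fin N → ℝ) :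
    Gfun g θ (w - w') = Gfun g θ w - Gfun g θ w' := by
  unfold Gfun
  rw [← smul_sub, ← Finset.sum_sub_distrib]
  congr 1
  apply Finset.sum_congr rfl
  intro n _
  rw [Pi.sub_apply, sub_smul]

theorem swiss_army_ij_leave_K_out
    (N D : ℕ) (hN : 0 < N) (hD : 0 < D)
    -- setup: compact convex parameter domain
    (Ωθ : Set (Fin D → ℝ)) (hΩc : IsCompact Ωθ) (hΩconv : Convex ℝ Ωθ)
    -- setup: the gₙ are continuously differentiable on Ωθ with Jacobians hₙ
    (g : Fin N → (Fin D → ℝ) → Fin D → ℝ)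
    (hm : Fin N → (Fin D → ℝ) → Matrix (Fin D) (Fin D) ℝ)
    (hderiv : ∀ n, ∀ θ ∈ Ωθ,
      HasFDerivWithinAt (g n) ((hm n θ).mulVecLin.toContinuousLinearMap) Ωθ θ)
    (hcont : ∀ n, ∀ i j : Fin D, ContinuousOn (fun θ => hm n θ i j) Ωθ)
    -- setup: θ̂₁ solves the estimating equation at weights 1_w
    (θ1 : Fin D → ℝ) (hθ1 : θ1 ∈ Ωθ) (hroot : Gfun g θ1 1 = 0)
    -- Assumption 2 (non-degeneracy)
    (Cop : ℝ)
    (hA2 : ∀ θ ∈ Ωθ, IsUnit (Hfun hm θ 1) ∧ opNorm (Hfun hm θ 1)⁻¹ ≤ Cop)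
    -- Assumption 3 (bounded averages)
    (Cg Ch : ℝ)
    (hA3g : ∀ θ ∈ Ωθ,
      vnorm2 (fun p : Fin N × Fin D => g p.1 θ p.2) / Real.sqrt N ≤ Cg)
    (hA3h : ∀ θ ∈ Ωθ,
      vnorm2 (fun p : Fin N × Fin D × Fin D => hm p.1 θ p.2.1 p.2.2) / Real.sqrt N ≤ Ch)
    -- Assumption 4 (local smoothness)
    (Δθ Lh : ℝ) (hΔθ : 0 < Δθ)
    (hA4 : ∀ θ ∈ Ωθ, vnorm2 (θ - θ1) ≤ Δθ →
      vnorm2 (fun p : Fin N × Fin D × Fin D =>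
          hm p.1 θ p.2.1 p.2.2 - hm p.1 θ1 p.2.1 p.2.2) / Real.sqrt N
        ≤ Lh * vnorm2 (θ - θ1))
    -- Assumption 5 (bounded weights), with W ⊇ W_K and C_w ≥ 1
    (K : ℕ) (hK1 : 1 ≤ K) (hKN : K ≤ N)
    (W : Set (Fin N → ℝ)) (Cw : ℝ)
    (hA5 : ∀ w ∈ W, vnorm2 w / Real.sqrt N ≤ Cw)
    (hWK : leaveKOut N K ⊆ W) (hCw1 : 1 ≤ Cw)
    -- symmetric case hypothesis
    (hsymm : ∀ n, ∀ θ ∈ Ωθ, (hm n θ).IsSymm)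
    (hpos : ∀ θ ∈ Ωθ, (Hfun hm θ 1).PosDef)
    -- C_∞ := sup over θ ∈ Ωθ and n of max{‖gₙ(θ)‖₁, ‖hₙ(θ)‖₁}
    (Cinf : ℝ)
    (hCinf : Cinf = ⨆ θ : Ωθ, ⨆ n : Fin N,
      max (vnorm1 (g n θ.1)) (mnorm1 (hm n θ.1)))
    -- δ_K := K·C_∞/N ≤ Δ_δ := min{Δθ/C_op, 1/(2 C_IJ C_op)}
    (hδΔ : K * Cinf / N ≤ min (Δθ / Cop) (1 / (2 * (1 + D * Cw * Lh * Cop) * Cop))) :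
    ∀ w ∈ leaveKOut N K, ∀ θw ∈ Ωθ, Gfun g θw w = 0 →
      vnorm2 (thetaIJ g hm θ1 w - θw)
          ≤ 2 * Cop ^ 2 * (1 + D * Cw * Lh * Cop) * (K * Cinf / N) ^ 2 ∧
      2 * Cop ^ 2 * (1 + D * Cw * Lh * Cop) * (K * Cinf / N) ^ 2
          ≤ 2 * Cop ^ 2 * (1 + D * Cw * Lh * Cop) * K ^ 2 * D ^ 2 * (max Cg Ch) ^ 2 / N := by
  intro w hw θw hθw hGw
  obtain ⟨S, hScard, hwdef⟩ := hw
  have hN' : (0:ℝ) < N := by exact_mod_cast hN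
  have hD' : (1:ℝ) ≤ D := by exact_mod_cast hD
  have hK' : (1:ℝ) ≤ K := by exact_mod_cast hK1
  have hsqrtN : (0:ℝ) < Real.sqrt N := Real.sqrt_pos.mpr hN'
  -- Cop > 0
  have hu1 : IsUnit (Hfun hm θ1 1) := (hA2 θ1 hθ1).1
  have hdet1 : IsUnit (Hfun hm θ1 1).det := Matrix.isUnit_iff_isUnit_det _ |>.mp hu1
  have hCop1 : opNorm (Hfun hm θ1 1)⁻¹ ≤ Cop := (hA2 θ1 hθ1).2
  have hCoppos : 0 < Cop := by
    refine lt_of_lt_of_le ?_ hCop1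
    have hne : (Hfun hm θ1 1)⁻¹ ≠ 0 := by
      intro h0
      have h1 : Hfun hm θ1 1 * (Hfun hm θ1 1)⁻¹ = 1 := Matrix.mul_nonsing_inv _ hdet1
      rw [h0, mul_zero] at h1
      have := congrFun (congrFun h1 ⟨0, hD⟩) ⟨0, hD⟩
      simp [Matrix.one_apply] at this
    have : Matrix.toEuclideanCLM (𝕜 := ℝ) (Hfun hm θ1 1)⁻¹ ≠ 0 := by
      intro h
      apply hne
      have h2 := congrArg (Matrix.toEuclideanCLM (𝕜 := ℝ)).symm h
      simpa using h2
    exact norm_pos_iff.mpr this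
  -- nonnegativity of Cg, Ch
  have hCg0 : 0 ≤ Cg :=
    le_trans (div_nonneg (vnorm2_nonneg _) (Real.sqrt_nonneg _)) (hA3g θ1 hθ1)
  have hCh0 : 0 ≤ Ch :=
    le_trans (div_nonneg (vnorm2_nonneg _) (Real.sqrt_nonneg _)) (hA3h θ1 hθ1)
  set Mx := max Cg Ch with hMx
  have hMx0 : 0 ≤ Mx := le_trans hCg0 (le_max_left _ _)
  -- pointwise bound for Cinf
  have hpoint : ∀ θ ∈ Ωθ, ∀ n : Fin N,
      max (vnorm1 (g n θ)) (mnorm1 (hm n θ)) ≤ Real.sqrt N * ((D:ℝ) * Mx) := by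
    intro θ hθ n
    have hsqrtD : Real.sqrt (D:ℝ) ≤ (D:ℝ) := by
      nlinarith [Real.sq_sqrt (by positivity : (0:ℝ) ≤ (D:ℝ)),
        Real.sqrt_nonneg (D:ℝ), hD', sq_nonneg (Real.sqrt (D:ℝ) - 1)]
    apply max_le
    · -- g part
      have hg2 : vnorm2 (g n θ) ≤ Real.sqrt N * Cg := by
        have hsub : vnorm2 (g n θ)
            ≤ vnorm2 (fun p : Fin N × Fin D => g p.1 θ p.2) := by
          unfold vnorm2
          apply Real.sqrt_le_sqrt
          rw [Fintype.sum_prod_type]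
          exact Finset.single_le_sum
            (f := fun m => ∑ i, (g m θ i) ^ 2)
            (fun m _ => Finset.sum_nonneg fun _ _ => sq_nonneg _) (Finset.mem_univ n)
        have h3 := hA3g θ hθ
        rw [div_le_iff₀ hsqrtN] at h3
        calc vnorm2 (g n θ) ≤ _ := hsub
          _ ≤ Cg * Real.sqrt N := h3
          _ = Real.sqrt N * Cg := mul_comm _ _
      calc vnorm1 (g n θ) ≤ Real.sqrt (Fintype.card (Fin D)) * vnorm2 (g n θ) :=
            vnorm1_le_sqrt_card _
        _ = Real.sqrt (D:ℝ) * vnorm2 (g n θ) := by rw [Fintype.card_fin]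
        _ ≤ (D:ℝ) * (Real.sqrt N * Cg) :=
            mul_le_mul hsqrtD hg2 (vnorm2_nonneg _) (by positivity)
        _ ≤ (D:ℝ) * (Real.sqrt N * Mx) := by
            apply mul_le_mul_of_nonneg_left _ (by positivity)
            exact mul_le_mul_of_nonneg_left (le_max_left _ _) (Real.sqrt_nonneg _)
        _ = Real.sqrt N * ((D:ℝ) * Mx) := by ring
    · -- h part
      have hh2 : vnorm2 (fun q : Fin D × Fin D => hm n θ q.1 q.2)
          ≤ Real.sqrt N * Ch := by
        have hsub : vnorm2 (fun q : Fin D × Fin D => hm n θ q.1 q.2)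
            ≤ vnorm2 (fun p : Fin N × Fin D × Fin D => hm p.1 θ p.2.1 p.2.2) := by
          unfold vnorm2
          apply Real.sqrt_le_sqrt
          conv_rhs => rw [Fintype.sum_prod_type]
          exact Finset.single_le_sum
            (f := fun m => ∑ q : Fin D × Fin D, (hm m θ q.1 q.2) ^ 2)
            (fun m _ => Finset.sum_nonneg fun _ _ => sq_nonneg _) (Finset.mem_univ n)
        have h3 := hA3h θ hθ
        rw [div_le_iff₀ hsqrtN] at h3
        calc vnorm2 (fun q : Fin D × Fin D => hm n θ q.1 q.2) ≤ _ := hsub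
          _ ≤ Ch * Real.sqrt N := h3
          _ = Real.sqrt N * Ch := mul_comm _ _
      have hcard : Real.sqrt (Fintype.card (Fin D × Fin D)) = (D:ℝ) := by
        rw [Fintype.card_prod, Fintype.card_fin]
        push_cast
        exact Real.sqrt_mul_self (by positivity)
      calc mnorm1 (hm n θ)
          = vnorm1 (fun q : Fin D × Fin D => hm n θ q.1 q.2) := mnorm1_eq_vnorm1 _
        _ ≤ Real.sqrt (Fintype.card (Fin D × Fin D))
            * vnorm2 (fun q : Fin D × Fin D => hm n θ q.1 q.2) := vnorm1_le_sqrt_card _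
        _ = (D:ℝ) * vnorm2 (fun q : Fin D × Fin D => hm n θ q.1 q.2) := by rw [hcard]
        _ ≤ (D:ℝ) * (Real.sqrt N * Ch) :=
            mul_le_mul_of_nonneg_left hh2 (by positivity)
        _ ≤ (D:ℝ) * (Real.sqrt N * Mx) := by
            apply mul_le_mul_of_nonneg_left _ (by positivity)
            exact mul_le_mul_of_nonneg_left (le_max_right _ _) (Real.sqrt_nonneg _)
        _ = Real.sqrt N * ((D:ℝ) * Mx) := by ring
  -- Cinf facts
  haveI hne1 : Nonempty Ωθ := ⟨⟨θ1, hθ1⟩⟩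
  haveI hne2 : Nonempty (Fin N) := ⟨⟨0, hN⟩⟩
  have hCinfB : Cinf ≤ Real.sqrt N * ((D:ℝ) * Mx) := by
    rw [hCinf]
    apply ciSup_le
    rintro ⟨θ, hθ⟩
    exact ciSup_le fun n => hpoint θ hθ n
  have hCinf_ge : ∀ θ ∈ Ωθ, ∀ n : Fin N,
      vnorm1 (g n θ) ≤ Cinf ∧ mnorm1 (hm n θ) ≤ Cinf := by
    intro θ hθ n
    have hbdd : BddAbove (Set.range fun θ' : Ωθ =>
        ⨆ n : Fin N, max (vnorm1 (g n θ'.1)) (mnorm1 (hm n θ'.1))) := by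
      refine ⟨Real.sqrt N * ((D:ℝ) * Mx), ?_⟩
      rintro x ⟨⟨θ', hθ'⟩, rfl⟩
      exact ciSup_le fun n => hpoint θ' hθ' n
    have h1 : (⨆ n : Fin N, max (vnorm1 (g n θ)) (mnorm1 (hm n θ))) ≤ Cinf := by
      rw [hCinf]
      exact le_ciSup hbdd ⟨θ, hθ⟩
    have h2 : max (vnorm1 (g n θ)) (mnorm1 (hm n θ))
        ≤ ⨆ n : Fin N, max (vnorm1 (g n θ)) (mnorm1 (hm n θ)) :=
      le_ciSup (f := fun n : Fin N => max (vnorm1 (g n θ)) (mnorm1 (hm n θ)))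
        (Set.Finite.bddAbove (Set.finite_range _)) n
    exact ⟨le_trans (le_trans (le_max_left _ _) h2) h1,
      le_trans (le_trans (le_max_right _ _) h2) h1⟩
  have hCinf0 : 0 ≤ Cinf := by
    refine le_trans ?_ ((hCinf_ge θ1 hθ1 ⟨0, hN⟩).1)
    exact Finset.sum_nonneg fun _ _ => abs_nonneg _
  set δ : ℝ := K * Cinf / N with hδdef
  have hδ0 : 0 ≤ δ := by positivity
  set CIJ : ℝ := 1 + D * Cw * Lh * Cop with hCIJ
  -- the second inequality, generic given CIJ ≥ 0
  have hsecond : 0 ≤ CIJ →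
      2 * Cop ^ 2 * CIJ * ((K:ℝ) * Cinf / N) ^ 2
        ≤ 2 * Cop ^ 2 * CIJ * (K:ℝ) ^ 2 * (D:ℝ) ^ 2 * Mx ^ 2 / N := by
    intro hCIJ0
    have h1 : Cinf ^ 2 ≤ (D:ℝ) ^ 2 * Mx ^ 2 * N := by
      have := mul_self_le_mul_self hCinf0 hCinfB
      calc Cinf ^ 2 = Cinf * Cinf := sq Cinf
        _ ≤ (Real.sqrt N * ((D:ℝ) * Mx)) * (Real.sqrt N * ((D:ℝ) * Mx)) := this
        _ = (Real.sqrt N * Real.sqrt N) * ((D:ℝ) ^ 2 * Mx ^ 2) := by ring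
        _ = (D:ℝ) ^ 2 * Mx ^ 2 * N := by
            rw [Real.mul_self_sqrt hN'.le]; ring
    calc 2 * Cop ^ 2 * CIJ * ((K:ℝ) * Cinf / N) ^ 2
        = (2 * Cop ^ 2 * CIJ * (K:ℝ) ^ 2 / (N:ℝ) ^ 2) * Cinf ^ 2 := by
          field_simp
      _ ≤ (2 * Cop ^ 2 * CIJ * (K:ℝ) ^ 2 / (N:ℝ) ^ 2) * ((D:ℝ) ^ 2 * Mx ^ 2 * N) := by
          apply mul_le_mul_of_nonneg_left h1
          positivity
      _ = 2 * Cop ^ 2 * CIJ * (K:ℝ) ^ 2 * (D:ℝ) ^ 2 * Mx ^ 2 / N := by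
          field_simp
  -- case analysis on Lh
  by_cases hLh : 0 ≤ Lh
  · -- main case
    have hCIJ0 : 0 ≤ CIJ := by
      have : 0 ≤ (D:ℝ) * Cw * Lh * Cop := by positivity
      linarith
    -- leave-K-out perturbation bounds
    have habsN : |(N:ℝ)⁻¹| = (N:ℝ)⁻¹ := abs_of_pos (by positivity)
    have hGdiff : ∀ θ ∈ Ωθ, vnorm2 (Gfun g θ 1 - Gfun g θ w) ≤ δ := by
      intro θ hθ
      have hrepr : Gfun g θ 1 - Gfun g θ w = (N:ℝ)⁻¹ • ∑ n ∈ S, g n θ := by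
        unfold Gfun
        rw [← smul_sub]
        congr 1
        rw [hwdef]
        simpa using onemw_sum S (fun n => g n θ)
      rw [hrepr, vnorm2_smul, habsN]
      calc (N:ℝ)⁻¹ * vnorm2 (∑ n ∈ S, g n θ)
          ≤ (N:ℝ)⁻¹ * ∑ n ∈ S, vnorm2 (g n θ) :=
            mul_le_mul_of_nonneg_left (vnorm2_sum_le S _) (by positivity)
        _ ≤ (N:ℝ)⁻¹ * ∑ _n ∈ S, Cinf := by
            apply mul_le_mul_of_nonneg_left _ (by positivity)
            exact Finset.sum_le_sum fun n _ =>
              (vnorm2_le_vnorm1 _).trans (hCinf_ge θ hθ n).1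
        _ = (N:ℝ)⁻¹ * (K * Cinf) := by
            rw [Finset.sum_const, hScard, nsmul_eq_mul]
        _ = δ := by rw [hδdef]; ring
    have hHdiffw : ∀ θ ∈ Ωθ, opNorm (Hfun hm θ 1 - Hfun hm θ w) ≤ δ := by
      intro θ hθ
      have hrepr : Hfun hm θ 1 - Hfun hm θ w = (N:ℝ)⁻¹ • ∑ n ∈ S, hm n θ := by
        unfold Hfun
        rw [← smul_sub]
        congr 1
        rw [hwdef]
        simpa using onemw_sum S (fun n => hm n θ)
      rw [hrepr, opNorm_smul, habsN]
      calc (N:ℝ)⁻¹ * opNorm (∑ n ∈ S, hm n θ)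
          ≤ (N:ℝ)⁻¹ * ∑ n ∈ S, opNorm (hm n θ) :=
            mul_le_mul_of_nonneg_left (opNorm_sum_le S _) (by positivity)
        _ ≤ (N:ℝ)⁻¹ * ∑ _n ∈ S, Cinf := by
            apply mul_le_mul_of_nonneg_left _ (by positivity)
            exact Finset.sum_le_sum fun n _ =>
              (opNorm_le_mnorm1 _).trans (hCinf_ge θ hθ n).2
        _ = (N:ℝ)⁻¹ * (K * Cinf) := by
            rw [Finset.sum_const, hScard, nsmul_eq_mul]
        _ = δ := by rw [hδdef]; ring
    -- A4 bound in operator norm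
    have hH1lip : ∀ θ ∈ Ωθ, vnorm2 (θ - θ1) ≤ Δθ →
        opNorm (Hfun hm θ 1 - Hfun hm θ1 1) ≤ Lh * vnorm2 (θ - θ1) := by
      intro θ hθ hball
      have hrepr : Hfun hm θ 1 - Hfun hm θ1 1 = (N:ℝ)⁻¹ • ∑ n, (hm n θ - hm n θ1) := by
        unfold Hfun
        rw [← smul_sub, ← Finset.sum_sub_distrib]
        congr 1
        apply Finset.sum_congr rfl
        intro n _
        rw [Pi.one_apply, one_smul, one_smul]
      rw [hrepr, opNorm_smul, habsN]
      set F : Fin N → ℝ := fun n =>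
        vnorm2 (fun p : Fin D × Fin D => hm n θ p.1 p.2 - hm n θ1 p.1 p.2) with hF
      have hstepA : opNorm (∑ n, (hm n θ - hm n θ1)) ≤ ∑ n, F n := by
        refine (opNorm_sum_le _ _).trans (Finset.sum_le_sum fun n _ => ?_)
        exact opNorm_le_frob _
      have hsum : ∑ n, F n ^ 2 = ∑ p : Fin N × Fin D × Fin D,
          (hm p.1 θ p.2.1 p.2.2 - hm p.1 θ1 p.2.1 p.2.2) ^ 2 := by
        rw [Fintype.sum_prod_type]
        apply Finset.sum_congr rfl
        intro n _
        simp only [hF]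
        exact Real.sq_sqrt (Finset.sum_nonneg fun _ _ => sq_nonneg _)
      have hstepC : Real.sqrt (∑ n, F n ^ 2)
          = vnorm2 (fun p : Fin N × Fin D × Fin D =>
              hm p.1 θ p.2.1 p.2.2 - hm p.1 θ1 p.2.1 p.2.2) := by
        unfold vnorm2
        rw [hsum]
      have hstepB : ∑ n, F n ≤ Real.sqrt N * Real.sqrt (∑ n, F n ^ 2) := by
        have h1 := Real.sum_mul_le_sqrt_mul_sqrt Finset.univ F (fun _ => (1:ℝ))
        simpa [Finset.card_univ, mul_comm] using h1
      have hA4' := hA4 θ hθ hball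
      rw [div_le_iff₀ hsqrtN] at hA4'
      calc (N:ℝ)⁻¹ * opNorm (∑ n, (hm n θ - hm n θ1))
          ≤ (N:ℝ)⁻¹ * (Real.sqrt N * Real.sqrt (∑ n, F n ^ 2)) := by
            apply mul_le_mul_of_nonneg_left _ (by positivity)
            exact hstepA.trans hstepB
        _ = (Real.sqrt N)⁻¹ * Real.sqrt (∑ n, F n ^ 2) := by
            have h9 : ((N:ℝ))⁻¹ = (Real.sqrt N)⁻¹ * (Real.sqrt N)⁻¹ := by
              rw [← mul_inv, Real.mul_self_sqrt hN'.le]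
            rw [h9, mul_assoc, inv_mul_cancel_left₀ hsqrtN.ne']
        _ ≤ (Real.sqrt N)⁻¹ * (Lh * vnorm2 (θ - θ1) * Real.sqrt N) := by
            apply mul_le_mul_of_nonneg_left _ (by positivity)
            rw [hstepC]
            exact hA4'
        _ = Lh * vnorm2 (θ - θ1) := by
            field_simp
    -- step 1 : vnorm2 (θw - θ1) ≤ Cop * δ
    have hHsym : ∀ θ' ∈ Ωθ, (Hfun hm θ' 1).IsSymm := by
      intro θ' hθ'
      unfold Matrix.IsSymm Hfun
      rw [Matrix.transpose_smul]
      congr 1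
      rw [Matrix.transpose_sum]
      apply Finset.sum_congr rfl
      intro n _
      rw [Matrix.transpose_smul, (hsymm n θ' hθ').eq]
    have hΔbound : vnorm2 (θw - θ1) ≤ Cop * δ := by
      set Δp : Fin D → ℝ := θw - θ1 with hΔp
      by_cases hΔ0 : Δp = 0
      · rw [hΔ0]
        have : vnorm2 (0 : Fin D → ℝ) = 0 := by simp [vnorm2]
        rw [this]
        positivity
      have hGθw1 : vnorm2 (Gfun g θw 1) ≤ δ := by
        have h1 := hGdiff θw hθw
        rw [hGw, sub_zero] at h1; exact h1
      set V := vnorm2 Δp with hV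
      have hVpos : 0 < V := vnorm2_pos hΔ0
      have hmemt : ∀ t ∈ Set.Icc (0:ℝ) 1, θ1 + t • Δp ∈ Ωθ := by
        intro t ht
        have h2 : (1 - t) • θ1 + t • θw = θ1 + t • Δp := by rw [hΔp]; module
        rw [← h2]
        exact hΩconv hθ1 hθw (by linarith [ht.2]) ht.1 (by ring)
      set LD : (Fin D → ℝ) →L[ℝ] ℝ := LinearMap.toContinuousLinearMap
        { toFun := fun v => v ⬝ᵥ Δp,
          map_add' := fun a b => add_dotProduct a b Δp,
          map_smul' := fun c a => smul_dotProduct c a Δp } with hLD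
      have hLDapp : ∀ v, LD v = v ⬝ᵥ Δp := fun v => rfl
      set ψ : ℝ → ℝ := fun t => (Gfun g (θ1 + t • Δp) 1) ⬝ᵥ Δp with hψ
      set q : ℝ → ℝ := fun t => (Hfun hm (θ1 + t • Δp) 1 *ᵥ Δp) ⬝ᵥ Δp with hq
      have hψd : ∀ t ∈ Set.Icc (0:ℝ) 1, HasDerivWithinAt ψ (q t) (Set.Icc 0 1) t := by
        intro t ht
        have hγ : HasDerivWithinAt (fun u : ℝ => θ1 + u • Δp) Δp (Set.Icc 0 1) t := by
          have h3 := ((hasDerivAt_id t).smul_const Δp).const_add θ1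
          simpa using h3.hasDerivWithinAt
        have hmaps : Set.MapsTo (fun u : ℝ => θ1 + u • Δp) (Set.Icc 0 1) Ωθ :=
          fun u hu => hmemt u hu
        have hcomp := (hasFDeriv_G_pi g hm Ωθ hderiv 1 _
          (hmemt t ht)).comp_hasDerivWithinAt t hγ hmaps
        have h4 := LD.hasFDerivAt.comp_hasDerivWithinAt t hcomp
        simpa [hψ, hq, Function.comp_def, hLDapp, Matrix.mulVecLin_apply] using h4
      have hψq : ∀ t ∈ Set.Icc (0:ℝ) 1, V ^ 2 / Cop ≤ q t := by
        intro t ht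
        have hθt := hmemt t ht
        have h5 := quad_lower _ (hHsym _ hθt) (hpos _ hθt) Cop hCoppos
          ((hA2 _ hθt).2) Δp
        calc V ^ 2 / Cop ≤ Δp ⬝ᵥ (Hfun hm (θ1 + t • Δp) 1 *ᵥ Δp) := h5
          _ = q t := dotProduct_comm _ _
      set c : ℝ := V ^ 2 / Cop with hc
      set f : ℝ → ℝ := fun t => ψ t - c * t with hf
      have hfd : ∀ t ∈ Set.Icc (0:ℝ) 1,
          HasDerivWithinAt f (q t - c) (Set.Icc 0 1) t := by
        intro t ht
        have h6 : HasDerivWithinAt (fun u : ℝ => c * u) c (Set.Icc 0 1) t := by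
          simpa using ((hasDerivAt_id t).const_mul c).hasDerivWithinAt
        exact (hψd t ht).sub h6
      have hcontf : ContinuousOn f (Set.Icc 0 1) :=
        fun t ht => (hfd t ht).continuousWithinAt
      have hmono : MonotoneOn f (Set.Icc (0:ℝ) 1) := by
        apply monotoneOn_of_hasDerivWithinAt_nonneg (convex_Icc 0 1) hcontf
          (f' := fun t => q t - c)
        · intro t ht
          rw [interior_Icc] at ht ⊢
          exact (hfd t (Set.Ioo_subset_Icc_self ht)).mono Set.Ioo_subset_Icc_self
        · intro t ht
          rw [interior_Icc] at ht
          have := hψq t (Set.Ioo_subset_Icc_self ht)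
          rw [hc]
          linarith
      have h01 := hmono (Set.left_mem_Icc.mpr zero_le_one)
        (Set.right_mem_Icc.mpr zero_le_one) zero_le_one
      have hψ0 : ψ 0 = 0 := by
        simp only [hψ, zero_smul, add_zero, hroot, zero_dotProduct]
      have hψ1 : ψ 1 ≤ δ * V := by
        have h7 : θ1 + (1:ℝ) • Δp = θw := by rw [hΔp]; module
        simp only [hψ, h7]
        exact (dot_le_vnorm2 _ _).trans
          (mul_le_mul_of_nonneg_right hGθw1 (vnorm2_nonneg _))
      have hfinal : V ^ 2 / Cop ≤ δ * V := by
        have hf0 : f 0 = ψ 0 := by simp [hf]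
        have hf1 : f 1 = ψ 1 - c := by simp [hf]
        rw [hf0, hf1, hψ0] at h01
        rw [hc] at h01
        linarith [hψ1]
      rw [div_le_iff₀ hCoppos] at hfinal
      have h8 : V * V ≤ (Cop * δ) * V := by nlinarith [hfinal]
      exact le_of_mul_le_mul_right h8 hVpos
    have hCopδΔθ : Cop * δ ≤ Δθ := by
      have h1 : δ ≤ Δθ / Cop := le_trans hδΔ (min_le_left _ _)
      calc Cop * δ ≤ Cop * (Δθ / Cop) := by
            exact mul_le_mul_of_nonneg_left h1 hCoppos.le
        _ = Δθ := by field_simp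
    -- step 2
    have hkey : vnorm2 (thetaIJ g hm θ1 w - θw)
        ≤ Cop * ((δ + Lh * (Cop * δ)) * (Cop * δ)) := by
      have hδLh0 : 0 ≤ δ + Lh * (Cop * δ) := by positivity
      set Te : (Fin D → ℝ) → EuclideanSpace ℝ (Fin D) :=
        fun v => (eL D).symm v with hTe
      set Ω' : Set (EuclideanSpace ℝ (Fin D)) := eL D ⁻¹' Ωθ with hΩ'
      have hΩ'conv : Convex ℝ Ω' := by
        have h := hΩconv.linear_preimage (eL D).toLinearEquiv.toLinearMap
        exact h
      set r : ℝ := Cop * δ with hr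
      have hr0 : 0 ≤ r := by positivity
      set s' : Set (EuclideanSpace ℝ (Fin D)) :=
        Ω' ∩ Metric.closedBall (Te θ1) r with hs'
      have hs'conv : Convex ℝ s' := hΩ'conv.inter (convex_closedBall _ _)
      have hTeKey : ∀ u v : Fin D → ℝ, ‖Te u - Te v‖ = vnorm2 (u - v) := by
        intro u v
        rw [vnorm2_eq_norm]
        rfl
      set F : EuclideanSpace ℝ (Fin D) → EuclideanSpace ℝ (Fin D) :=
        fun x => Te (Gfun g (eL D x) w)
          - Matrix.toEuclideanCLM (𝕜 := ℝ) (Hfun hm θ1 1) x with hFdef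
      have hFd : ∀ x ∈ s', HasFDerivWithinAt F
          (Matrix.toEuclideanCLM (𝕜 := ℝ) (Hfun hm (eL D x) w)
            - Matrix.toEuclideanCLM (𝕜 := ℝ) (Hfun hm θ1 1)) s' x := by
        intro x hx
        have h1 := (hasFDeriv_G_E g hm Ωθ hderiv w (eL D x) hx.1).mono
          (Set.inter_subset_left (s := Ω') (t := Metric.closedBall (Te θ1) r))
        rw [ContinuousLinearEquiv.symm_apply_apply] at h1
        exact h1.sub
          ((Matrix.toEuclideanCLM (𝕜 := ℝ) (Hfun hm θ1 1)).hasFDerivAt.hasFDerivWithinAt)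
      have hbound : ∀ x ∈ s',
          ‖Matrix.toEuclideanCLM (𝕜 := ℝ) (Hfun hm (eL D x) w)
            - Matrix.toEuclideanCLM (𝕜 := ℝ) (Hfun hm θ1 1)‖ ≤ δ + Lh * r := by
        intro x hx
        rw [← map_sub]
        have hxθ : vnorm2 (eL D x - θ1) ≤ r := by
          have hd := hx.2
          rw [Metric.mem_closedBall, dist_eq_norm] at hd
          have h9 : ‖x - Te θ1‖ = vnorm2 (eL D x - θ1) := by
            rw [vnorm2_eq_norm]; rfl
          rw [← h9]; exact hd
        have hxΔθ : vnorm2 (eL D x - θ1) ≤ Δθ := le_trans hxθ hCopδΔθ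
        have h2 : opNorm (Hfun hm (eL D x) w - Hfun hm θ1 1)
            ≤ opNorm (Hfun hm (eL D x) w - Hfun hm (eL D x) 1)
              + opNorm (Hfun hm (eL D x) 1 - Hfun hm θ1 1) := by
          have h10 : Hfun hm (eL D x) w - Hfun hm θ1 1
              = (Hfun hm (eL D x) w - Hfun hm (eL D x) 1)
                + (Hfun hm (eL D x) 1 - Hfun hm θ1 1) := by abel
          rw [h10]; exact opNorm_add_le _ _
        have h3 : opNorm (Hfun hm (eL D x) w - Hfun hm (eL D x) 1) ≤ δ := by
          have h4 := hHdiffw (eL D x) hx.1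
          have h5 : Hfun hm (eL D x) w - Hfun hm (eL D x) 1
              = -(Hfun hm (eL D x) 1 - Hfun hm (eL D x) w) := by abel
          rw [h5, opNorm_neg]
          exact h4
        have h6 := hH1lip (eL D x) hx.1 hxΔθ
        have h7 : Lh * vnorm2 (eL D x - θ1) ≤ Lh * r :=
          mul_le_mul_of_nonneg_left hxθ hLh
        show opNorm (Hfun hm (eL D x) w - Hfun hm θ1 1) ≤ δ + Lh * r
        linarith
      have hmemθ1 : Te θ1 ∈ s' := by
        constructor
        · show Te θ1 ∈ Ω'
          rw [hΩ', Set.mem_preimage, hTe, ContinuousLinearEquiv.apply_symm_apply]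
          exact hθ1
        · exact Metric.mem_closedBall_self hr0
      have hmemθw : Te θw ∈ s' := by
        constructor
        · show Te θw ∈ Ω'
          rw [hΩ', Set.mem_preimage, hTe, ContinuousLinearEquiv.apply_symm_apply]
          exact hθw
        · rw [Metric.mem_closedBall, dist_eq_norm, hTeKey]
          exact hΔbound
      have hmvt := hs'conv.norm_image_sub_le_of_norm_hasFDerivWithin_le
        hFd hbound hmemθ1 hmemθw
      have hTe' : ∀ v : Fin D → ℝ, Te v = (WithLp.equiv 2 (Fin D → ℝ)).symm v :=
        fun v => rfl
      have hFval : ∀ θ : Fin D → ℝ,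
          F (Te θ) = Te (Gfun g θ w - (Hfun hm θ1 1).mulVec θ) := by
        intro θ
        simp only [hFdef, hTe, ContinuousLinearEquiv.apply_symm_apply]
        show (WithLp.equiv 2 (Fin D → ℝ)).symm (Gfun g θ w)
            - Matrix.toEuclideanCLM (𝕜 := ℝ) (Hfun hm θ1 1)
              ((WithLp.equiv 2 (Fin D → ℝ)).symm θ)
          = (WithLp.equiv 2 (Fin D → ℝ)).symm (Gfun g θ w - (Hfun hm θ1 1).mulVec θ)
        rw [toECLM_apply]
        rfl
      have hdet1' : IsUnit (Hfun hm θ1 1).det := hdet1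
      have hIJ : thetaIJ g hm θ1 w - θw = (Hfun hm θ1 1)⁻¹.mulVec
          ((Gfun g θw w - (Hfun hm θ1 1).mulVec θw)
            - (Gfun g θ1 w - (Hfun hm θ1 1).mulVec θ1)) := by
        have hG1w : Gfun g θ1 (w - 1) = Gfun g θ1 w := by
          rw [Gfun_sub_w, hroot, sub_zero]
        unfold thetaIJ
        rw [hG1w, hGw]
        have hexp : ((0 : Fin D → ℝ) - (Hfun hm θ1 1).mulVec θw)
            - (Gfun g θ1 w - (Hfun hm θ1 1).mulVec θ1)
            = -(Gfun g θ1 w) - (Hfun hm θ1 1).mulVec (θw - θ1) := by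
          rw [Matrix.mulVec_sub]; abel
        rw [hexp, Matrix.mulVec_sub, Matrix.mulVec_neg, Matrix.mulVec_mulVec,
          Matrix.nonsing_inv_mul _ hdet1', Matrix.one_mulVec]
        abel
      rw [hIJ]
      calc vnorm2 ((Hfun hm θ1 1)⁻¹.mulVec
            ((Gfun g θw w - (Hfun hm θ1 1).mulVec θw)
              - (Gfun g θ1 w - (Hfun hm θ1 1).mulVec θ1)))
          ≤ opNorm (Hfun hm θ1 1)⁻¹ * vnorm2
            ((Gfun g θw w - (Hfun hm θ1 1).mulVec θw)
              - (Gfun g θ1 w - (Hfun hm θ1 1).mulVec θ1)) := vnorm2_mulVec_le _ _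
        _ ≤ Cop * vnorm2 ((Gfun g θw w - (Hfun hm θ1 1).mulVec θw)
              - (Gfun g θ1 w - (Hfun hm θ1 1).mulVec θ1)) :=
            mul_le_mul_of_nonneg_right hCop1 (vnorm2_nonneg _)
        _ = Cop * ‖F (Te θw) - F (Te θ1)‖ := by
            rw [hFval θw, hFval θ1, hTeKey]
        _ ≤ Cop * ((δ + Lh * r) * ‖Te θw - Te θ1‖) :=
            mul_le_mul_of_nonneg_left hmvt hCoppos.le
        _ = Cop * ((δ + Lh * (Cop * δ)) * vnorm2 (θw - θ1)) := by
            rw [hTeKey]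
        _ ≤ Cop * ((δ + Lh * (Cop * δ)) * (Cop * δ)) := by
            apply mul_le_mul_of_nonneg_left _ hCoppos.le
            exact mul_le_mul_of_nonneg_left hΔbound hδLh0
    constructor
    · refine hkey.trans ?_
      rw [hCIJ]
      have hDCw : (1:ℝ) ≤ (D:ℝ) * Cw := le_trans hCw1 (le_mul_of_one_le_left (by linarith) hD')
      have e1 : 0 ≤ Lh * Cop ^ 3 * δ ^ 2 := by positivity
      have e2 : 0 ≤ ((D:ℝ) * Cw - 1) * (Lh * Cop ^ 3 * δ ^ 2) :=
        mul_nonneg (by linarith) e1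
      have e3 : 0 ≤ Cop ^ 2 * δ ^ 2 := by positivity
      nlinarith [e1, e2, e3]
    · exact hsecond hCIJ0
  · -- degenerate case : Lh < 0 forces Ωθ = {θ1}
    push_neg at hLh
    have hsub : ∀ θ' ∈ Ωθ, θ' = θ1 := by
      intro θ' hθ'
      by_contra hne
      have hV : 0 < vnorm2 (θ' - θ1) := vnorm2_pos (sub_ne_zero.mpr hne)
      set V := vnorm2 (θ' - θ1) with hVdef
      set t : ℝ := min 1 (Δθ / (2 * V)) with htdef
      have ht0 : 0 < t := lt_min one_pos (by positivity)
      have ht1 : t ≤ 1 := min_le_left _ _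
      set θt := θ1 + t • (θ' - θ1) with hθt
      have hmemt : θt ∈ Ωθ := by
        have h1 := hΩconv hθ1 hθ' (by linarith : (0:ℝ) ≤ 1 - t) ht0.le (by ring)
        have h2 : (1 - t) • θ1 + t • θ' = θ1 + t • (θ' - θ1) := by module
        rw [hθt, ← h2]; exact h1
      have hvt : vnorm2 (θt - θ1) = t * V := by
        have h3 : θt - θ1 = t • (θ' - θ1) := by rw [hθt]; abel
        rw [h3, vnorm2_smul, abs_of_pos ht0]
      have hle : vnorm2 (θt - θ1) ≤ Δθ := by
        rw [hvt]
        have h4 : t ≤ Δθ / (2 * V) := min_le_right _ _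
        calc t * V ≤ (Δθ / (2 * V)) * V := mul_le_mul_of_nonneg_right h4 hV.le
          _ = Δθ / 2 := by field_simp
          _ ≤ Δθ := by linarith
      have h5 := hA4 θt hmemt hle
      have h6 : 0 ≤ (vnorm2 fun p : Fin N × Fin D × Fin D =>
          hm p.1 θt p.2.1 p.2.2 - hm p.1 θ1 p.2.1 p.2.2) / Real.sqrt N :=
        div_nonneg (vnorm2_nonneg _) (Real.sqrt_nonneg _)
      have h7 : Lh * vnorm2 (θt - θ1) < 0 := by
        rw [hvt]; exact mul_neg_of_neg_of_pos hLh (by positivity)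
      linarith
    have hθw1 : θw = θ1 := hsub θw hθw
    have hCIJ0 : 0 ≤ CIJ := by
      by_contra hneg
      push_neg at hneg
      have h2 : 1 / (2 * CIJ * Cop) < 0 := by
        apply div_neg_of_pos_of_neg one_pos
        have : 2 * CIJ < 0 := by linarith
        exact mul_neg_of_neg_of_pos this hCoppos
      have h3 : δ < 0 := lt_of_le_of_lt (le_trans hδΔ (min_le_right _ _)) h2
      exact absurd h3 (not_lt.mpr hδ0)
    have hzero : vnorm2 (thetaIJ g hm θ1 w - θw) = 0 := by
      have hG1w : Gfun g θ1 w = 0 := by rw [← hθw1]; exact hGw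
      have : thetaIJ g hm θ1 w - θw = 0 := by
        unfold thetaIJ
        rw [Gfun_sub_w, hroot, sub_zero, hG1w, Matrix.mulVec_zero, hθw1, sub_zero, sub_self]
      rw [this]
      simp [vnorm2]
    constructor
    · rw [hzero]; positivity
    · exact hsecond hCIJ0
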